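/- arXiv:2206.03640 — 8 statements merged into one kernel-verified Lean document; each statement's English description precedes it below -/
import Mathlib

section
/- Let t0 ∈ ℝ, let c > 0, b > 0 with b < c, and let K ≥ 0. Let v : ℝ → ℝ be continuous on [t0, ∞) with v(t0) ≥ 0, and suppose that for every t ≥ t0 the upper right Dini derivative satisfies D⁺v(t) ≤ −c·v(t) + K·e^{−b(t−t0)}. Then for every t ≥ t0, v(t) ≤ e^{−b(t−t0)}·(v(t0) + K/(c−b)). -/
/-- The upper right Dini derivative of `v` at `t`:
`D⁺v(t) = limsup_{h→0⁺} (v(t+h) − v(t))/h`, valued in `EReal`. -/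
noncomputable def upperDini (v : ℝ → ℝ) (t : ℝ) : EReal :=
  Filter.limsup (fun h : ℝ => (((v (t + h) - v t) / h : ℝ) : EReal))
    (nhdsWithin 0 (Set.Ioi 0))

theorem stmt_0 (t0 c b K : ℝ) (hc : 0 < c) (hb : 0 < b) (hbc : b < c) (hK : 0 ≤ K)
    (v : ℝ → ℝ) (hv_cont : ContinuousOn v (Set.Ici t0)) (hv0 : 0 ≤ v t0)
    (hdini : ∀ t, t0 ≤ t →
      upperDini v t ≤ ((-c * v t + K * Real.exp (-b * (t - t0)) : ℝ) : EReal)) :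
    ∀ t, t0 ≤ t → v t ≤ Real.exp (-b * (t - t0)) * (v t0 + K / (c - b)) := by
  intro T hT
  -- it suffices to prove the bound with an extra `ε` in the constant
  have key : ∀ ε : ℝ, 0 < ε →
      v T ≤ Real.exp (-b * (T - t0)) * (v t0 + ε + K / (c - b)) := by
    intro ε hε
    set A : ℝ := v t0 + ε + K / (c - b) with hA
    set B : ℝ → ℝ := fun x => Real.exp (-b * (x - t0)) * A with hBdef
    have hB' : ∀ x : ℝ, HasDerivAt B (-b * B x) x := by
      intro x
      have h1 : HasDerivAt (fun x : ℝ => -b * (x - t0)) (-b) x := by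
        simpa using ((hasDerivAt_id x).sub_const t0).const_mul (-b)
      have h2 := (h1.exp).mul_const A
      simpa [B, mul_comm, mul_assoc, mul_left_comm] using h2
    set f' : ℝ → ℝ := fun x => -c * v x + K * Real.exp (-b * (x - t0)) with hf'def
    have hslope : ∀ x ∈ Set.Ico t0 T, ∀ r, f' x < r →
        ∃ᶠ z in nhdsWithin x (Set.Ioi x), slope v x z < r := by
      intro x hx r hr
      have hlim : upperDini v x < ((r : ℝ) : EReal) := by
        refine lt_of_le_of_lt (hdini x hx.1) ?_
        exact_mod_cast hr
      have hev : ∀ᶠ h in nhdsWithin (0:ℝ) (Set.Ioi 0),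
          (((v (x + h) - v x) / h : ℝ) : EReal) < ((r : ℝ) : EReal) :=
        Filter.eventually_lt_of_limsup_lt hlim
      have hev' : ∀ᶠ h in nhdsWithin (0:ℝ) (Set.Ioi 0),
          (v (x + h) - v x) / h < r := by
        filter_upwards [hev] with h hh
        exact_mod_cast hh
      have hmap : Filter.map (fun h : ℝ => x + h) (nhdsWithin 0 (Set.Ioi 0)) =
          nhdsWithin x (Set.Ioi x) := by
        have := (Homeomorph.addLeft x).isEmbedding.map_nhdsWithin_eq (Set.Ioi (0:ℝ)) 0
        simpa using this
      have hev2 : ∀ᶠ z in nhdsWithin x (Set.Ioi x), slope v x z < r := by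
        rw [← hmap, Filter.eventually_map]
        filter_upwards [hev'] with h hh
        simpa [slope_def_field, div_eq_inv_mul, add_sub_cancel_left] using hh
      exact hev2.frequently
    have hcont : ContinuousOn v (Set.Icc t0 T) :=
      hv_cont.mono (Set.Icc_subset_Ici_self)
    have hinit : v t0 ≤ B t0 := by
      have : (0:ℝ) ≤ ε + K / (c - b) :=
        add_nonneg hε.le (div_nonneg hK (by linarith))
      simp only [B, hA, sub_self, mul_zero, Real.exp_zero, one_mul]
      linarith
    have bound : ∀ x ∈ Set.Ico t0 T, v x = B x → f' x < -b * B x := by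
      intro x _ hxB
      have hexp : 0 < Real.exp (-b * (x - t0)) := Real.exp_pos _
      have hAε : 0 < v t0 + ε := by linarith
      simp only [hf'def]
      rw [hxB]
      have : -c * B x + b * B x = -(c - b) * B x := by ring
      have hBx : B x = Real.exp (-b * (x - t0)) * A := rfl
      have hcb : 0 < c - b := by linarith
      -- goal: -c * B x + K * exp < -b * B x, i.e. K * exp < (c - b) * B x
      rw [hBx]
      have hKA : K < (c - b) * A := by
        have : (c - b) * A = (c - b) * (v t0 + ε) + K := by
          rw [hA]
          field_simp
        nlinarith
      nlinarith
    have := image_le_of_liminf_slope_right_lt_deriv_boundary hcont hslope hinit hB' bound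
      (Set.right_mem_Icc.mpr hT)
    exact this
  -- pass to the limit ε → 0⁺
  have hexp : 0 < Real.exp (-b * (T - t0)) := Real.exp_pos _
  refine le_of_forall_pos_le_add fun δ hδ => ?_
  have h := key (δ / Real.exp (-b * (T - t0))) (div_pos hδ hexp)
  calc v T ≤ Real.exp (-b * (T - t0)) *
        (v t0 + δ / Real.exp (-b * (T - t0)) + K / (c - b)) := h
    _ = Real.exp (-b * (T - t0)) * (v t0 + K / (c - b)) + δ := by
        field_simp
        ring
end

section
/- Let t0 ∈ ℝ, let c > 0, b > 0 with b > c, and let K ≥ 0. Let v : ℝ → ℝ be continuous on [t0, ∞) with v(t0) ≥ 0, and suppose that for every t ≥ t0 the upper right Dini derivative satisfies D⁺v(t) ≤ −c·v(t) + K·e^{−b(t−t0)}. Then for every t ≥ t0, v(t) ≤ e^{−c(t−t0)}·(v(t0) + K/(b−c)). -/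
theorem stmt_1 (t0 c b K : ℝ) (hc : 0 < c) (hb : 0 < b) (hbc : c < b) (hK : 0 ≤ K)
    (v : ℝ → ℝ) (hv_cont : ContinuousOn v (Set.Ici t0)) (hv0 : 0 ≤ v t0)
    (hdini : ∀ t, t0 ≤ t →
      upperDini v t ≤ ((-c * v t + K * Real.exp (-b * (t - t0)) : ℝ) : EReal)) :
    ∀ t, t0 ≤ t → v t ≤ Real.exp (-c * (t - t0)) * (v t0 + K / (b - c)) := by
  intro T hT
  have hbc' : (0:ℝ) < b - c := by linarith
  set y : ℝ → ℝ := fun t => Real.exp (-c * (t - t0)) * v t0 +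
    K / (b - c) * (Real.exp (-c * (t - t0)) - Real.exp (-b * (t - t0))) with hy
  -- Step 1: for every ε > 0, v t ≤ y t + ε * (1 + (t - t0)) on [t0, T].
  have key : ∀ ε : ℝ, 0 < ε → v T ≤ y T + ε * (1 + (T - t0)) := by
    intro ε hε
    set B : ℝ → ℝ := fun t => y t + ε * (1 + (t - t0)) with hB
    set B' : ℝ → ℝ := fun t => -c * Real.exp (-c * (t - t0)) * v t0 +
      K / (b - c) * (-c * Real.exp (-c * (t - t0)) + b * Real.exp (-b * (t - t0))) + ε with hB'
    have hf' : ∀ x ∈ Set.Ico t0 T, ∀ r,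
        (-c * v x + K * Real.exp (-b * (x - t0))) < r →
        ∃ᶠ z in nhdsWithin x (Set.Ioi x), slope v x z < r := by
      intro x hx r hr
      have h1 : upperDini v x < ((r : ℝ) : EReal) := by
        refine lt_of_le_of_lt (hdini x hx.1) ?_
        exact_mod_cast hr
      have h2 : ∀ᶠ h in nhdsWithin (0:ℝ) (Set.Ioi 0),
          (((v (x + h) - v x) / h : ℝ) : EReal) < ((r : ℝ) : EReal) :=
        Filter.eventually_lt_of_limsup_lt h1
      have h3 : ∀ᶠ h in nhdsWithin (0:ℝ) (Set.Ioi 0),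
          (v (x + h) - v x) / h < r := by
        filter_upwards [h2] with h hh
        exact_mod_cast hh
      -- transfer to z near x from the right
      have htend : Filter.Tendsto (fun z : ℝ => z - x) (nhdsWithin x (Set.Ioi x))
          (nhdsWithin (0:ℝ) (Set.Ioi 0)) := by
        refine tendsto_nhdsWithin_of_tendsto_nhds_of_eventually_within _ ?_ ?_
        · have : Filter.Tendsto (fun z : ℝ => z - x) (nhds x) (nhds (x - x)) :=
            (continuous_id.sub continuous_const).tendsto x
          simpa using this.mono_left nhdsWithin_le_nhds
        · filter_upwards [self_mem_nhdsWithin] with z hz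
          simpa [sub_pos] using hz
      have h4 : ∀ᶠ z in nhdsWithin x (Set.Ioi x), (v (x + (z - x)) - v x) / (z - x) < r :=
        htend.eventually h3
      refine Filter.Eventually.frequently ?_
      filter_upwards [h4] with z hz
      rw [slope_def_field]
      simpa [add_sub_cancel] using hz
    have hBderiv : ∀ x ∈ Set.Ico t0 T, HasDerivWithinAt B (B' x) (Set.Ici x) x := by
      intro x _
      have h1 : HasDerivAt (fun t : ℝ => -c * (t - t0)) (-c) x := by
        simpa using ((hasDerivAt_id x).sub_const t0).const_mul (-c)
      have h2 : HasDerivAt (fun t : ℝ => -b * (t - t0)) (-b) x := by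
        simpa using ((hasDerivAt_id x).sub_const t0).const_mul (-b)
      have e1 : HasDerivAt (fun t : ℝ => Real.exp (-c * (t - t0)))
          (Real.exp (-c * (x - t0)) * (-c)) x := (h1.exp)
      have e2 : HasDerivAt (fun t : ℝ => Real.exp (-b * (t - t0)))
          (Real.exp (-b * (x - t0)) * (-b)) x := (h2.exp)
      have : HasDerivAt B (B' x) x := by
        have := (((e1.mul_const (v t0)).add
          (((e1.sub e2)).const_mul (K / (b - c)))).add
          (((hasDerivAt_id x).sub_const t0).const_add 1 |>.const_mul ε))
        refine this.congr_deriv ?_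
        simp only [hB']
        ring
      exact this.hasDerivWithinAt
    have hbound : ∀ x ∈ Set.Ico t0 T, v x = B x →
        (-c * v x + K * Real.exp (-b * (x - t0))) < B' x := by
      intro x hx hvB
      rw [hvB]
      have hid : B' x = -c * B x + K * Real.exp (-b * (x - t0)) + ε * (1 + c + c * (x - t0)) := by
        simp only [hB', hB, hy]
        field_simp
        ring
      rw [hid]
      have : 0 < ε * (1 + c + c * (x - t0)) := by
        have : 0 ≤ x - t0 := by linarith [hx.1]
        positivity
      linarith
    have hcont : ContinuousOn v (Set.Icc t0 T) :=
      hv_cont.mono (Set.Icc_subset_Ici_self)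
    have hBcont : ContinuousOn B (Set.Icc t0 T) := by
      apply Continuous.continuousOn
      fun_prop
    have ha : v t0 ≤ B t0 := by
      simp only [hB, hy]
      simp
      nlinarith
    have := image_le_of_liminf_slope_right_lt_deriv_boundary' hcont hf' ha hBcont hBderiv hbound
      (Set.right_mem_Icc.2 hT)
    exact this
  -- Step 2: let ε → 0.
  have hyT : v T ≤ y T := by
    refine le_of_forall_pos_le_add ?_
    intro d hd
    have hM0 : (0:ℝ) < 1 + (T - t0) := by linarith
    have hk := key (d / (1 + (T - t0))) (by positivity)
    have heq : d / (1 + (T - t0)) * (1 + (T - t0)) = d := by field_simp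
    rw [heq] at hk
    exact hk
  -- Step 3: y T ≤ RHS.
  refine hyT.trans ?_
  simp only [hy]
  have h1 : 0 ≤ K / (b - c) * Real.exp (-b * (T - t0)) := by positivity
  nlinarith [Real.exp_pos (-c * (T - t0)), Real.exp_pos (-b * (T - t0))]
end

section
/- Let t0 ∈ ℝ, let c > 0, and let K ≥ 0. Let v : ℝ → ℝ be continuous on [t0, ∞) with v(t0) ≥ 0, and suppose that for every t ≥ t0 the upper right Dini derivative satisfies D⁺v(t) ≤ −c·v(t) + K·e^{−c(t−t0)}. Then for every ξ with 0 < ξ < c and every t ≥ t0, v(t) ≤ e^{−ξ(t−t0)}·(v(t0) + K/(c−ξ)). -/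
open Set Filter Topology

theorem stmt_2 (t0 c K : ℝ) (hc : 0 < c) (hK : 0 ≤ K)
    (v : ℝ → ℝ) (hv_cont : ContinuousOn v (Set.Ici t0)) (hv0 : 0 ≤ v t0)
    (hdini : ∀ t, t0 ≤ t →
      upperDini v t ≤ ((-c * v t + K * Real.exp (-c * (t - t0)) : ℝ) : EReal)) :
    ∀ ξ, 0 < ξ → ξ < c →
      ∀ t, t0 ≤ t → v t ≤ Real.exp (-ξ * (t - t0)) * (v t0 + K / (c - ξ)) := by
  -- Dini slope condition, usable by the fencing lemma
  have hf' : ∀ t, ∀ x ∈ Ico t0 t, ∀ r,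
      (-c * v x + K * Real.exp (-c * (x - t0))) < r →
      ∃ᶠ z in 𝓝[>] x, slope v x z < r := by
    intro t x hx r hr
    have hlim : upperDini v x < (r : EReal) :=
      lt_of_le_of_lt (hdini x hx.1) (by exact_mod_cast hr)
    have hev : ∀ᶠ h in 𝓝[>] (0:ℝ), (v (x + h) - v x) / h < r := by
      filter_upwards [Filter.eventually_lt_of_limsup_lt hlim] with h hh
      exact_mod_cast hh
    have htend : Tendsto (fun z : ℝ => z - x) (𝓝[>] x) (𝓝[>] (0:ℝ)) := by
      apply tendsto_nhdsWithin_of_tendsto_nhds_of_eventually_within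
      · have h0 := ((continuous_id.sub continuous_const).tendsto x :
            Tendsto (fun z : ℝ => z - x) (𝓝 x) (𝓝 (x - x)))
        replace h0 : Tendsto (fun z : ℝ => z - x) (𝓝 x) (𝓝 0) := by simpa using (continuous_sub_right x).tendsto x
        exact h0.mono_left nhdsWithin_le_nhds
      · filter_upwards [self_mem_nhdsWithin] with z hz
        simpa [sub_pos] using hz
    have : ∀ᶠ z in 𝓝[>] x, slope v x z < r := by
      filter_upwards [htend.eventually hev] with z hz
      simpa [slope_def_field] using hz
    exact this.frequently
  -- Main step: v t ≤ exp(-c(t-t0)) * (v t0 + K(t-t0))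
  have main : ∀ t, t0 ≤ t → v t ≤ Real.exp (-c * (t - t0)) * (v t0 + K * (t - t0)) := by
    intro t ht
    have hEps : ∀ ε : ℝ, 0 < ε →
        v t ≤ Real.exp (-c * (t - t0)) * (v t0 + ε + (K + ε) * (t - t0)) := by
      intro ε hε
      set B : ℝ → ℝ := fun x => Real.exp (-c * (x - t0)) * (v t0 + ε + (K + ε) * (x - t0))
        with hBdef
      set B' : ℝ → ℝ := fun x => -c * B x + (K + ε) * Real.exp (-c * (x - t0)) with hB'def
      have hB : ∀ x : ℝ, HasDerivAt B (B' x) x := by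
        intro x
        have h1 : HasDerivAt (fun y : ℝ => -c * (y - t0)) (-c) x := by
          simpa using ((hasDerivAt_id x).sub_const t0).const_mul (-c)
        have h2 : HasDerivAt (fun y : ℝ => Real.exp (-c * (y - t0)))
            (Real.exp (-c * (x - t0)) * (-c)) x := h1.exp
        have h3 : HasDerivAt (fun y : ℝ => v t0 + ε + (K + ε) * (y - t0)) (K + ε) x := by
          simpa using (((hasDerivAt_id x).sub_const t0).const_mul (K + ε)).const_add (v t0 + ε)
        have := h2.mul h3
        refine this.congr_deriv ?_
        simp only [hB'def, hBdef]
        ring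
      have happ := image_le_of_liminf_slope_right_lt_deriv_boundary
        (f := v) (f' := fun x => -c * v x + K * Real.exp (-c * (x - t0)))
        (a := t0) (b := t) (hv_cont.mono Icc_subset_Ici_self)
        (hf' t) (by simp [hBdef]; linarith) hB
        (fun x hx hxB => by
          simp only [hB'def, ← hxB]
          have : 0 < ε * Real.exp (-c * (x - t0)) := by positivity
          nlinarith)
      exact happ (right_mem_Icc.2 ht)
    -- let ε → 0
    have hlim : Tendsto (fun ε : ℝ =>
        Real.exp (-c * (t - t0)) * (v t0 + ε + (K + ε) * (t - t0))) (𝓝[>] 0)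
        (𝓝 (Real.exp (-c * (t - t0)) * (v t0 + 0 + (K + 0) * (t - t0)))) := by
      apply Tendsto.mono_left _ nhdsWithin_le_nhds
      exact (continuous_const.mul (((continuous_const.add continuous_id).add
        ((continuous_const.add continuous_id).mul continuous_const)))).tendsto 0
    have : v t ≤ Real.exp (-c * (t - t0)) * (v t0 + 0 + (K + 0) * (t - t0)) := by
      refine ge_of_tendsto hlim ?_
      filter_upwards [self_mem_nhdsWithin] with ε hε
      exact hEps ε hε
    simpa using this
  -- Final elementary estimate
  intro ξ hξ hξc t ht
  set s := t - t0 with hs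
  have hs0 : 0 ≤ s := by simp only [hs]; linarith
  have hd : 0 < c - ξ := by linarith
  have hcs : Real.exp (-c * s) = Real.exp (-(c - ξ) * s) * Real.exp (-ξ * s) := by
    rw [← Real.exp_add]; ring_nf
  have key : (c - ξ) * s * Real.exp (-(c - ξ) * s) ≤ 1 := by
    have h1 : (c - ξ) * s ≤ Real.exp ((c - ξ) * s) :=
      le_trans (by linarith [Real.add_one_le_exp ((c - ξ) * s)]) le_rfl
    have h2 : Real.exp (-(c - ξ) * s) = (Real.exp ((c - ξ) * s))⁻¹ := by
      rw [← Real.exp_neg]; ring_nf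
    rw [h2]
    have hep : 0 < Real.exp ((c - ξ) * s) := Real.exp_pos _
    calc (c - ξ) * s * (Real.exp ((c - ξ) * s))⁻¹
        ≤ Real.exp ((c - ξ) * s) * (Real.exp ((c - ξ) * s))⁻¹ :=
          mul_le_mul_of_nonneg_right h1 (by positivity)
      _ = 1 := mul_inv_cancel₀ hep.ne'
  have h1 : Real.exp (-c * s) * v t0 ≤ Real.exp (-ξ * s) * v t0 := by
    apply mul_le_mul_of_nonneg_right _ hv0
    exact Real.exp_le_exp.2 (by nlinarith)
  have h2 : Real.exp (-c * s) * (K * s) ≤ Real.exp (-ξ * s) * (K / (c - ξ)) := by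
    have hsub : Real.exp (-(c - ξ) * s) * (K * s) ≤ K / (c - ξ) := by
      rw [le_div_iff₀ hd]
      nlinarith [mul_le_mul_of_nonneg_left key hK]
    calc Real.exp (-c * s) * (K * s)
        = Real.exp (-ξ * s) * (Real.exp (-(c - ξ) * s) * (K * s)) := by rw [hcs]; ring
      _ ≤ Real.exp (-ξ * s) * (K / (c - ξ)) :=
          mul_le_mul_of_nonneg_left hsub (Real.exp_pos _).le
  calc v t ≤ Real.exp (-c * s) * (v t0 + K * s) := main t ht
    _ = Real.exp (-c * s) * v t0 + Real.exp (-c * s) * (K * s) := by ring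
    _ ≤ Real.exp (-ξ * s) * v t0 + Real.exp (-ξ * s) * (K / (c - ξ)) := add_le_add h1 h2
    _ = Real.exp (-ξ * s) * (v t0 + K / (c - ξ)) := by ring
end

section
/- Let n ∈ ℕ, t0 ∈ ℝ, let μ > σ ≥ 0, a > 0, b > 0 with b ≠ μ − σ, and set c = μ − σ and η = min{b, c}. Let α1 : [0,∞) → [0,∞) be of class K∞. Let L ≥ 0 and let χ : [0,∞) → [0,∞) satisfy χ(s) ≤ L·s for all s ∈ [0, a]. Let x : ℝ → ℝⁿ be continuous, let ε : ℝ → ℝⁿ, and let v : ℝ → ℝ be continuous on [t0,∞) satisfying, for all t ≥ t0: (i) α1(‖x(t)‖) ≤ v(t); (ii) D⁺v(t) ≤ −μ·v(t) + χ(‖ε(t)‖); and (iii) χ(‖ε(t)‖) ≤ σ·α1(‖x(t)‖) + χ(a·e^{−b(t−t0)}). Then, with M = v(t0) + a·L/|c−b|, one has α1(‖x(t)‖) ≤ M·e^{−η(t−t0)} for all t ≥ t0; consequently ‖x(t)‖ ≤ α1^{−1}(M) for all t ≥ t0 and ‖x(t)‖ → 0 as t → ∞. -/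
/-- A function `α : [0,∞) → [0,∞)` of class `K∞`: continuous, strictly increasing,
`α(0) = 0`, nonnegative, and `α(s) → ∞` as `s → ∞`. -/
structure IsClassKInfty (α : ℝ → ℝ) : Prop where
  cont : ContinuousOn α (Set.Ici 0)
  strictMono : StrictMonoOn α (Set.Ici 0)
  zero : α 0 = 0
  nonneg : ∀ s, 0 ≤ s → 0 ≤ α s
  tendsto_atTop : Filter.Tendsto α Filter.atTop Filter.atTop

/-- From an `upperDini` bound we obtain frequent small slopes to the right. -/
lemma freq_slope_of_upperDini {v : ℝ → ℝ} {t g r : ℝ}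
    (hD : upperDini v t ≤ (g : EReal)) (hgr : g < r) :
    ∃ᶠ z in nhdsWithin t (Set.Ioi t), slope v t z < r := by
  have hlt : upperDini v t < (r : EReal) :=
    lt_of_le_of_lt hD (by exact_mod_cast hgr)
  have hev : ∀ᶠ h in nhdsWithin (0 : ℝ) (Set.Ioi 0),
      (((v (t + h) - v t) / h : ℝ) : EReal) < (r : EReal) :=
    Filter.eventually_lt_of_limsup_lt hlt
  have hevR : ∀ᶠ h in nhdsWithin (0 : ℝ) (Set.Ioi 0),
      (v (t + h) - v t) / h < r := by
    filter_upwards [hev] with h hh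
    exact_mod_cast hh
  have hmap : Filter.Tendsto (fun z : ℝ => z - t) (nhdsWithin t (Set.Ioi t))
      (nhdsWithin (0 : ℝ) (Set.Ioi 0)) := by
    rw [tendsto_nhdsWithin_iff]
    refine ⟨((continuous_id.sub continuous_const).tendsto' t 0 (by simp)).mono_left
      nhdsWithin_le_nhds, ?_⟩
    exact eventually_mem_nhdsWithin.mono fun z hz => by
      simp only [Set.mem_Ioi] at hz ⊢; linarith
  have hev2 : ∀ᶠ z in nhdsWithin t (Set.Ioi t), slope v t z < r := by
    filter_upwards [hmap.eventually hevR] with z hz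
    rw [slope_def_field]
    simpa using hz
  exact hev2.frequently

lemma hasDerivAt_expc (c t0 t : ℝ) :
    HasDerivAt (fun s => Real.exp (-c * (s - t0))) (-c * Real.exp (-c * (t - t0))) t := by
  have h := (((hasDerivAt_id t).sub_const t0).const_mul (-c)).exp
  simpa [mul_comm] using h

theorem stmt_9 (n : ℕ) (t0 μ σ a b L : ℝ)
    (hσ : 0 ≤ σ) (hμσ : σ < μ) (ha : 0 < a) (hb : 0 < b) (hbc : b ≠ μ - σ) (hL : 0 ≤ L)
    (α1 : ℝ → ℝ) (hα1 : IsClassKInfty α1)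
    (α1inv : ℝ → ℝ) (hα1inv : ∀ s, 0 ≤ s → α1inv (α1 s) = s)
    (hα1inv_mono : MonotoneOn α1inv (Set.Ici 0))
    (χ : ℝ → ℝ) (hχ_nonneg : ∀ s, 0 ≤ s → 0 ≤ χ s)
    (hχ_lin : ∀ s ∈ Set.Icc 0 a, χ s ≤ L * s)
    (x : ℝ → EuclideanSpace ℝ (Fin n)) (hx_cont : Continuous x)
    (ε : ℝ → EuclideanSpace ℝ (Fin n))
    (v : ℝ → ℝ) (hv_cont : ContinuousOn v (Set.Ici t0))
    (h1 : ∀ t, t0 ≤ t → α1 ‖x t‖ ≤ v t)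
    (h2 : ∀ t, t0 ≤ t → upperDini v t ≤ ((-μ * v t + χ ‖ε t‖ : ℝ) : EReal))
    (h3 : ∀ t, t0 ≤ t →
      χ ‖ε t‖ ≤ σ * α1 ‖x t‖ + χ (a * Real.exp (-b * (t - t0)))) :
    (∀ t, t0 ≤ t → α1 ‖x t‖ ≤
        (v t0 + a * L / |(μ - σ) - b|) *
          Real.exp (-(min b (μ - σ)) * (t - t0))) ∧
    (∀ t, t0 ≤ t → ‖x t‖ ≤ α1inv (v t0 + a * L / |(μ - σ) - b|)) ∧
    Filter.Tendsto (fun t => ‖x t‖) Filter.atTop (nhds 0) := by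
  set c : ℝ := μ - σ with hc_def
  have hc : 0 < c := by simp [hc_def]; linarith
  have hcb : c - b ≠ 0 := fun h => hbc (by linarith)
  set K : ℝ := a * L / (c - b) with hK_def
  set g : ℝ → ℝ := fun s => -c * v s + a * L * Real.exp (-b * (s - t0)) with hg_def
  set B : ℝ → ℝ := fun s => v t0 * Real.exp (-c * (s - t0))
      + K * (Real.exp (-b * (s - t0)) - Real.exp (-c * (s - t0))) with hB_def
  -- the upper Dini derivative of v is bounded by g
  have hvg : ∀ s, t0 ≤ s → upperDini v s ≤ ((g s : ℝ) : EReal) := by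
    intro s hs
    refine (h2 s hs).trans ?_
    have hE1 : Real.exp (-b * (s - t0)) ≤ 1 := by
      apply Real.exp_le_one_iff.mpr; nlinarith
    have hE0 : 0 < Real.exp (-b * (s - t0)) := Real.exp_pos _
    have hmem : a * Real.exp (-b * (s - t0)) ∈ Set.Icc 0 a :=
      ⟨by positivity, by nlinarith⟩
    have hchain : -μ * v s + χ ‖ε s‖ ≤ g s := by
      have := h3 s hs
      have h4 := hχ_lin _ hmem
      have h5 := h1 s hs
      simp only [hg_def, hc_def]
      nlinarith [hα1.nonneg ‖x s‖ (norm_nonneg _)]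
    exact_mod_cast hchain
  have hv0 : 0 ≤ v t0 := le_trans (hα1.nonneg _ (norm_nonneg _)) (h1 t0 le_rfl)
  -- comparison: v ≤ Bδ on [t0, ∞) for every δ > 0
  have key : ∀ δ : ℝ, 0 < δ → ∀ t, t0 ≤ t →
      v t ≤ B t + δ / c * (1 - Real.exp (-c * (t - t0))) := by
    intro δ hδ t ht
    set Bd : ℝ → ℝ := fun s => B s + δ / c * (1 - Real.exp (-c * (s - t0))) with hBd_def
    have hBd' : ∀ s : ℝ, HasDerivAt Bd
        (-c * Bd s + a * L * Real.exp (-b * (s - t0)) + δ) s := by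
      intro s
      have h1' := (hasDerivAt_expc c t0 s).const_mul (v t0)
      have h2' := ((hasDerivAt_expc b t0 s).sub (hasDerivAt_expc c t0 s)).const_mul K
      have h3' := ((hasDerivAt_const s (1:ℝ)).sub (hasDerivAt_expc c t0 s)).const_mul (δ / c)
      have h := (h1'.add h2').add h3'
      refine h.congr_deriv ?_
      simp only [hBd_def, hB_def, hK_def]
      field_simp
      ring
    have hfc : ContinuousOn v (Set.Icc t0 t) := hv_cont.mono Set.Icc_subset_Ici_self
    have ha0 : v t0 ≤ Bd t0 := by simp [hBd_def, hB_def]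
    have hf' : ∀ s ∈ Set.Ico t0 t, ∀ r, g s < r →
        ∃ᶠ z in nhdsWithin s (Set.Ioi s), slope v s z < r := fun s hs r hr =>
      freq_slope_of_upperDini (hvg s hs.1) hr
    have bound : ∀ s ∈ Set.Ico t0 t, v s = Bd s →
        g s < -c * Bd s + a * L * Real.exp (-b * (s - t0)) + δ := by
      intro s _ he
      simp only [hg_def]; rw [he]; linarith
    exact image_le_of_liminf_slope_right_lt_deriv_boundary hfc hf' ha0
      (fun s => hBd' s) bound ⟨ht, le_rfl⟩
  have hvB : ∀ t, t0 ≤ t → v t ≤ B t := by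
    intro t ht
    refine le_of_forall_pos_le_add fun e he => ?_
    have h := key (e * c) (by positivity) t ht
    have hE1 : Real.exp (-c * (t - t0)) ≤ 1 := Real.exp_le_one_iff.mpr (by nlinarith)
    have hE0 : 0 < Real.exp (-c * (t - t0)) := Real.exp_pos _
    rw [mul_div_assoc, div_self hc.ne', mul_one] at h
    nlinarith
  -- B ≤ M * exp(-η τ)
  set M : ℝ := v t0 + a * L / |c - b| with hM_def
  have hM0 : 0 ≤ M := by
    have : 0 ≤ a * L / |c - b| := by positivity
    simp only [hM_def]; linarith
  have hBM : ∀ t, t0 ≤ t → B t ≤ M * Real.exp (-(min b c) * (t - t0)) := by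
    intro t ht
    have hEb : 0 < Real.exp (-b * (t - t0)) := Real.exp_pos _
    have hEc : 0 < Real.exp (-c * (t - t0)) := Real.exp_pos _
    rcases lt_or_gt_of_ne (fun h => hbc h.symm : c ≠ b) with hlt | hgt
    · -- c < b : η = c, K ≤ 0
      have habs : |c - b| = b - c := by rw [abs_of_neg (by linarith)]; ring
      have hmin : min b c = c := min_eq_right hlt.le
      have hK : K ≤ 0 := by
        simp only [hK_def]
        apply div_nonpos_of_nonneg_of_nonpos (by positivity) (by linarith)
      have hMK : M = v t0 - K := by
        have hbc' : b - c ≠ 0 := by intro h; exact hbc (by linarith)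
        simp only [hM_def, hK_def, habs]
        field_simp
        ring
      have hEbc : Real.exp (-b * (t - t0)) ≤ Real.exp (-c * (t - t0)) :=
        Real.exp_le_exp.mpr (by nlinarith)
      rw [hmin, hMK]
      simp only [hB_def]
      nlinarith
    · -- b < c : η = b, K ≥ 0
      have habs : |c - b| = c - b := abs_of_pos (by linarith)
      have hmin : min b c = b := min_eq_left hgt.le
      have hK : 0 ≤ K := by
        simp only [hK_def]
        exact div_nonneg (by positivity) (by linarith)
      have hMK : M = v t0 + K := by rw [hM_def, hK_def, habs]
      have hEcb : Real.exp (-c * (t - t0)) ≤ Real.exp (-b * (t - t0)) :=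
        Real.exp_le_exp.mpr (by nlinarith)
      rw [hmin, hMK]
      simp only [hB_def]
      nlinarith
  have part1 : ∀ t, t0 ≤ t → α1 ‖x t‖ ≤ M * Real.exp (-(min b c) * (t - t0)) :=
    fun t ht => le_trans (h1 t ht) (le_trans (hvB t ht) (hBM t ht))
  have hη : 0 < min b c := lt_min hb hc
  have part2 : ∀ t, t0 ≤ t → ‖x t‖ ≤ α1inv M := by
    intro t ht
    have hE1 : Real.exp (-(min b c) * (t - t0)) ≤ 1 :=
      Real.exp_le_one_iff.mpr (by nlinarith)
    have hle : α1 ‖x t‖ ≤ M := le_trans (part1 t ht) (by nlinarith)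
    calc ‖x t‖ = α1inv (α1 ‖x t‖) := (hα1inv _ (norm_nonneg _)).symm
      _ ≤ α1inv M := hα1inv_mono (hα1.nonneg _ (norm_nonneg _)) hM0 hle
  refine ⟨part1, part2, ?_⟩
  -- tendsto
  have hMexp : Filter.Tendsto (fun t => M * Real.exp (-(min b c) * (t - t0)))
      Filter.atTop (nhds 0) := by
    rw [show (0:ℝ) = M * 0 by ring]
    apply Filter.Tendsto.const_mul
    apply Real.tendsto_exp_atBot.comp
    have h1' : Filter.Tendsto (fun k : ℝ => k - t0) Filter.atTop Filter.atTop := by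
      simpa [sub_eq_add_neg] using
        Filter.tendsto_atTop_add_const_right Filter.atTop (-t0) Filter.tendsto_id
    exact Filter.Tendsto.const_mul_atTop_of_neg (by linarith) h1'
  rw [tendsto_order]
  constructor
  · intro q hq
    exact Filter.Eventually.of_forall fun t => lt_of_lt_of_le hq (norm_nonneg _)
  · intro δ hδ
    have hαδ : 0 < α1 δ := by
      have := hα1.strictMono (Set.self_mem_Ici) (Set.mem_Ici.mpr hδ.le) hδ
      rwa [hα1.zero] at this
    have hev : ∀ᶠ t in Filter.atTop, M * Real.exp (-(min b c) * (t - t0)) < α1 δ :=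
      hMexp.eventually_lt_const hαδ
    filter_upwards [hev, Filter.eventually_ge_atTop t0] with t hlt ht
    by_contra hcon
    push_neg at hcon
    have : α1 δ ≤ α1 ‖x t‖ :=
      hα1.strictMono.monotoneOn (Set.mem_Ici.mpr hδ.le)
        (Set.mem_Ici.mpr (norm_nonneg _)) hcon
    have := le_trans this (part1 t ht)
    linarith
end

section
/- Let n ∈ ℕ, t0 ∈ ℝ, and let μ > σ ≥ 0. Let α1 : [0,∞) → [0,∞) be of class K∞, let χ : [0,∞) → [0,∞), let x : ℝ → ℝⁿ be continuous, let ε : ℝ → ℝⁿ, and let v : ℝ → ℝ be continuous on [t0,∞) satisfying, for all t ≥ t0: (i) α1(‖x(t)‖) ≤ v(t); (ii) D⁺v(t) ≤ −μ·v(t) + χ(‖ε(t)‖); and (iii) χ(‖ε(t)‖) ≤ σ·α1(‖x(t)‖). Then α1(‖x(t)‖) ≤ v(t0)·e^{−(μ−σ)(t−t0)} for all t ≥ t0; consequently ‖x(t)‖ → 0 as t → ∞. -/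
theorem stmt_10 (n : ℕ) (t0 μ σ : ℝ) (hσ : 0 ≤ σ) (hμσ : σ < μ)
    (α1 : ℝ → ℝ) (hα1 : IsClassKInfty α1)
    (χ : ℝ → ℝ) (hχ_nonneg : ∀ s, 0 ≤ s → 0 ≤ χ s)
    (x : ℝ → EuclideanSpace ℝ (Fin n)) (hx_cont : Continuous x)
    (ε : ℝ → EuclideanSpace ℝ (Fin n))
    (v : ℝ → ℝ) (hv_cont : ContinuousOn v (Set.Ici t0))
    (h1 : ∀ t, t0 ≤ t → α1 ‖x t‖ ≤ v t)
    (h2 : ∀ t, t0 ≤ t → upperDini v t ≤ ((-μ * v t + χ ‖ε t‖ : ℝ) : EReal))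
    (h3 : ∀ t, t0 ≤ t → χ ‖ε t‖ ≤ σ * α1 ‖x t‖) :
    (∀ t, t0 ≤ t → α1 ‖x t‖ ≤ v t0 * Real.exp (-(μ - σ) * (t - t0))) ∧
    Filter.Tendsto (fun t => ‖x t‖) Filter.atTop (nhds 0) := by
  -- v is nonnegative on [t0, ∞)
  have hvnn : ∀ t, t0 ≤ t → 0 ≤ v t := fun t ht =>
    le_trans (hα1.nonneg _ (norm_nonneg _)) (h1 t ht)
  -- Dini derivative bound with the combined constant
  have hD : ∀ t, t0 ≤ t → upperDini v t ≤ ((-(μ - σ) * v t : ℝ) : EReal) := by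
    intro t ht
    refine le_trans (h2 t ht) ?_
    have : -μ * v t + χ ‖ε t‖ ≤ -(μ - σ) * v t := by
      have h3' := h3 t ht
      have hσα : σ * α1 ‖x t‖ ≤ σ * v t := mul_le_mul_of_nonneg_left (h1 t ht) hσ
      nlinarith
    exact_mod_cast this
  -- Grönwall on each interval [t0, b]
  have key : ∀ t, t0 ≤ t → v t ≤ v t0 * Real.exp (-(μ - σ) * (t - t0)) := by
    intro b hb
    have H := le_gronwallBound_of_liminf_deriv_right_le
      (f := v) (f' := fun s => -(μ - σ) * v s) (δ := v t0) (K := -(μ - σ)) (ε := 0)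
      (a := t0) (b := b)
      (hv_cont.mono (Set.Icc_subset_Ici_self))
      ?_ le_rfl (fun s _ => by simp) b ⟨hb, le_rfl⟩
    · rwa [gronwallBound_ε0] at H
    · intro s hs r hr
      have hlt : upperDini v s < (r : EReal) := lt_of_le_of_lt (hD s hs.1) (by exact_mod_cast hr)
      have hev : ∀ᶠ h in nhdsWithin 0 (Set.Ioi 0),
          (((v (s + h) - v s) / h : ℝ) : EReal) < (r : EReal) :=
        Filter.eventually_lt_of_limsup_lt hlt
      have htend : Filter.Tendsto (fun z : ℝ => z - s) (nhdsWithin s (Set.Ioi s))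
          (nhdsWithin 0 (Set.Ioi 0)) := by
        apply Filter.Tendsto.inf
        · have : Filter.Tendsto (fun z : ℝ => z - s) (nhds s) (nhds (s - s)) :=
            (continuous_id.sub continuous_const).tendsto s
          simpa using this
        · refine Filter.tendsto_principal_principal.2 ?_
          intro z hz
          exact sub_pos.2 (show s < z from hz)
      have hev2 : ∀ᶠ z in nhdsWithin s (Set.Ioi s),
          (z - s)⁻¹ * (v z - v s) < r := by
        filter_upwards [htend.eventually hev] with z hz
        have : ((v (s + (z - s)) - v s) / (z - s) : ℝ) < r := by exact_mod_cast hz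
        rw [add_sub_cancel] at this
        rw [inv_mul_eq_div]
        exact this
      exact hev2.frequently
  have hexp : Filter.Tendsto (fun t => v t0 * Real.exp (-(μ - σ) * (t - t0)))
      Filter.atTop (nhds 0) := by
    have h1' : Filter.Tendsto (fun t : ℝ => -(μ - σ) * (t - t0)) Filter.atTop Filter.atBot := by
      apply Filter.Tendsto.neg_mul_atTop (by linarith : -(μ - σ) < 0) tendsto_const_nhds
      exact Filter.tendsto_atTop_add_const_right _ _ Filter.tendsto_id
    have := (Real.tendsto_exp_atBot.comp h1').const_mul (v t0)
    simpa using this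
  have hbound : ∀ t, t0 ≤ t → α1 ‖x t‖ ≤ v t0 * Real.exp (-(μ - σ) * (t - t0)) :=
    fun t ht => le_trans (h1 t ht) (key t ht)
  refine ⟨hbound, ?_⟩
  rw [Metric.tendsto_atTop]
  intro d hd
  have hαd : 0 < α1 d := by
    have := hα1.strictMono (Set.self_mem_Ici) (Set.mem_Ici.2 hd.le) hd
    rwa [hα1.zero] at this
  have hev := (hexp.eventually_lt_const hαd).and
    (Filter.eventually_ge_atTop t0)
  obtain ⟨N, hN⟩ := hev.exists_forall_of_atTop
  refine ⟨N, fun t ht => ?_⟩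
  obtain ⟨hlt, ht0⟩ := hN t ht
  have hα : α1 ‖x t‖ < α1 d := lt_of_le_of_lt (hbound t ht0) hlt
  have hxd : ‖x t‖ < d := by
    by_contra hc
    push_neg at hc
    exact absurd (hα1.strictMono.monotoneOn (Set.mem_Ici.2 hd.le)
      (Set.mem_Ici.2 (norm_nonneg _)) hc) (not_le.2 hα)
  simpa [Real.dist_eq, abs_of_nonneg (norm_nonneg (x t))] using hxd
end

section
/- Let n ∈ ℕ, τ ≥ 0, η > 0, C ≥ 0, L2 ≥ 0, L3 ≥ 0, and let t0 ≤ t_i ≤ t be real numbers. Let x : ℝ → ℝⁿ be continuous and differentiable on [t_i, t], and suppose: (i) ‖x'(s)‖ ≤ L2·sup_{u∈[s−τ, s]} ‖x(u)‖ + L3·‖x(t_i)‖ for all s ∈ [t_i, t]; and (ii) ‖x(u)‖ ≤ C·e^{−η(u−t0)} for all u ≥ t0 − τ. Then ‖x(t_i) − x(t)‖ ≤ λ1·(e^{−η(t_i−t0)} − e^{−η(t−t0)}) + λ2·(t − t_i)·e^{−η(t_i−t0)}, where λ1 = L2·C·e^{ητ}/η and λ2 = L3·C. -/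
theorem stmt_11 (n : ℕ) (τ η C L2 L3 t0 ti t : ℝ)
    (hτ : 0 ≤ τ) (hη : 0 < η) (hC : 0 ≤ C) (hL2 : 0 ≤ L2) (hL3 : 0 ≤ L3)
    (ht0i : t0 ≤ ti) (hit : ti ≤ t)
    (x : ℝ → EuclideanSpace ℝ (Fin n)) (hx_cont : Continuous x)
    (x' : ℝ → EuclideanSpace ℝ (Fin n))
    (hderiv : ∀ s ∈ Set.Icc ti t, HasDerivAt x (x' s) s)
    (hbound : ∀ s ∈ Set.Icc ti t,
      ‖x' s‖ ≤ L2 * sSup ((fun u => ‖x u‖) '' Set.Icc (s - τ) s) + L3 * ‖x ti‖)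
    (hdecay : ∀ u, t0 - τ ≤ u → ‖x u‖ ≤ C * Real.exp (-η * (u - t0))) :
    ‖x ti - x t‖ ≤
      (L2 * C * Real.exp (η * τ) / η) *
          (Real.exp (-η * (ti - t0)) - Real.exp (-η * (t - t0))) +
        (L3 * C) * (t - ti) * Real.exp (-η * (ti - t0)) := by
  set lam1 : ℝ := L2 * C * Real.exp (η * τ) / η with hlam1
  set lam2 : ℝ := L3 * C with hlam2
  set B : ℝ → ℝ := fun s =>
    lam1 * (Real.exp (-η * (ti - t0)) - Real.exp (-η * (s - t0))) +
      lam2 * (s - ti) * Real.exp (-η * (ti - t0)) with hBdef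
  set B' : ℝ → ℝ := fun s =>
    L2 * C * Real.exp (η * τ) * Real.exp (-η * (s - t0)) +
      lam2 * Real.exp (-η * (ti - t0)) with hB'def
  have hBderiv : ∀ s : ℝ, HasDerivAt B (B' s) s := by
    intro s
    have h1 : HasDerivAt (fun s : ℝ => Real.exp (-η * (s - t0))) (-η * Real.exp (-η * (s - t0))) s := by
      have := (Real.hasDerivAt_exp (-η * (s - t0))).comp s
        (((hasDerivAt_id s).sub_const t0).const_mul (-η))
      simpa [mul_comm, Function.comp_def] using this
    have h2 : HasDerivAt (fun s : ℝ =>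
        lam1 * (Real.exp (-η * (ti - t0)) - Real.exp (-η * (s - t0))))
        (lam1 * (η * Real.exp (-η * (s - t0)))) s := by
      have := ((hasDerivAt_const s (Real.exp (-η * (ti - t0)))).sub h1).const_mul lam1
      refine this.congr_deriv ?_
      ring
    have h3 : HasDerivAt (fun s : ℝ => lam2 * (s - ti) * Real.exp (-η * (ti - t0)))
        (lam2 * Real.exp (-η * (ti - t0))) s := by
      have := (((hasDerivAt_id s).sub_const ti).const_mul lam2).mul_const
        (Real.exp (-η * (ti - t0)))
      simpa using this
    have := h2.add h3
    refine this.congr_deriv ?_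
    simp only [hlam1, hB'def]
    field_simp
  have key : ∀ s ∈ Set.Ico ti t, ‖x' s‖ ≤ B' s := by
    intro s hs
    have hsIcc : s ∈ Set.Icc ti t := ⟨hs.1, le_of_lt hs.2⟩
    refine (hbound s hsIcc).trans ?_
    have hxti : ‖x ti‖ ≤ C * Real.exp (-η * (ti - t0)) :=
      hdecay ti (by linarith)
    have hsup : sSup ((fun u => ‖x u‖) '' Set.Icc (s - τ) s) ≤
        C * Real.exp (η * τ) * Real.exp (-η * (s - t0)) := by
      apply Real.sSup_le
      · rintro v ⟨u, hu, rfl⟩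
        have hu1 : t0 - τ ≤ u := by
          have := hu.1; have := hs.1; linarith
        refine (hdecay u hu1).trans ?_
        rw [mul_assoc, ← Real.exp_add]
        apply mul_le_mul_of_nonneg_left _ hC
        apply Real.exp_le_exp.2
        have := hu.1
        nlinarith [hη.le]
      · positivity
    calc L2 * sSup ((fun u => ‖x u‖) '' Set.Icc (s - τ) s) + L3 * ‖x ti‖
        ≤ L2 * (C * Real.exp (η * τ) * Real.exp (-η * (s - t0))) +
          L3 * (C * Real.exp (-η * (ti - t0))) := by
          gcongr
      _ = B' s := by simp only [hB'def, hlam2]; ring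
  have hmain := image_norm_le_of_norm_deriv_right_le_deriv_boundary
    (f := fun s => x s - x ti) (f' := x') (a := ti) (b := t)
    ((hx_cont.sub continuous_const).continuousOn)
    (fun s hs => by
      have := (hderiv s ⟨hs.1, hs.2.le⟩).sub (hasDerivAt_const s (x ti))
      simpa using (hderiv s ⟨hs.1, hs.2.le⟩).hasDerivWithinAt)
    (B := B) (B' := B')
    (by simp [hBdef])
    hBderiv key
  have hfin := hmain (Set.right_mem_Icc.2 hit)
  rw [norm_sub_rev]
  simpa [hBdef, mul_assoc] using hfin
end

section
/- Let r > 0 and 0 < q1 < q2, and let x : ℝ → ℝ be continuous. Define v2 : ℝ → ℝ by v2(t) = ∫_{t−r}^{t} |x(s)| · ( ((t−s)/r)·q1 + ((s−t+r)/r)·q2 ) ds. Then for every t, v2'(t) ≤ −((q2−q1)/(r·q2)) · v2(t) + q2·|x(t)| − q1·|x(t−r)|. -/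
set_option maxHeartbeats 800000


theorem stmt_13 (r q1 q2 : ℝ) (hr : 0 < r) (hq1 : 0 < q1) (hq12 : q1 < q2)
    (x : ℝ → ℝ) (hx_cont : Continuous x) (v2 : ℝ → ℝ)
    (hv2 : ∀ t, v2 t =
      ∫ s in (t - r)..t, |x s| * (((t - s) / r) * q1 + ((s - t + r) / r) * q2)) :
    ∀ t, deriv v2 t ≤
      -((q2 - q1) / (r * q2)) * v2 t + q2 * |x t| - q1 * |x (t - r)| := by
  intro t
  have hrne : r ≠ 0 := ne_of_gt hr
  have hq2 : 0 < q2 := hq1.trans hq12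
  have hc1 : Continuous (fun s : ℝ => |x s|) := hx_cont.abs
  have hc2 : Continuous (fun s : ℝ => s * |x s|) := continuous_id.mul hc1
  set F : ℝ → ℝ := fun u => ∫ s in (0:ℝ)..u, |x s| with hF
  set G : ℝ → ℝ := fun u => ∫ s in (0:ℝ)..u, s * |x s| with hG
  have hFd : ∀ u : ℝ, HasDerivAt F (|x u|) u := fun u =>
    intervalIntegral.integral_hasDerivAt_right (hc1.intervalIntegrable _ _)
      (hc1.stronglyMeasurableAtFilter _ _) hc1.continuousAt
  have hGd : ∀ u : ℝ, HasDerivAt G (u * |x u|) u := fun u =>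
    intervalIntegral.integral_hasDerivAt_right (hc2.intervalIntegrable _ _)
      (hc2.stronglyMeasurableAtFilter _ _) hc2.continuousAt
  have hsub1 : ∀ u : ℝ, F u - F (u - r) = ∫ s in (u - r)..u, |x s| := fun u =>
    intervalIntegral.integral_interval_sub_left (hc1.intervalIntegrable _ _)
      (hc1.intervalIntegrable _ _)
  have hsub2 : ∀ u : ℝ, G u - G (u - r) = ∫ s in (u - r)..u, s * |x s| := fun u =>
    intervalIntegral.integral_interval_sub_left (hc2.intervalIntegrable _ _)
      (hc2.intervalIntegrable _ _)
  set c : ℝ := (q2 - q1) / r with hcdef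
  have hv2' : v2 = fun u => (((q1 - q2) * u + r * q2) / r) * (F u - F (u - r))
      + c * (G u - G (u - r)) := by
    funext u
    rw [hv2 u]
    have hpt : ∀ s : ℝ, |x s| * (((u - s) / r) * q1 + ((s - u + r) / r) * q2)
        = (((q1 - q2) * u + r * q2) / r) * |x s| + c * (s * |x s|) := by
      intro s
      rw [hcdef]
      field_simp
      ring
    simp_rw [hpt]
    rw [intervalIntegral.integral_add (f := fun s => ((q1 - q2) * u + r * q2) / r * |x s|)
        (g := fun s => c * (s * |x s|))
        ((continuous_const.mul hc1).intervalIntegrable _ _)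
        ((continuous_const.mul hc2).intervalIntegrable _ _),
      intervalIntegral.integral_const_mul, intervalIntegral.integral_const_mul,
      hsub1 u, hsub2 u]
  have h1 : HasDerivAt (fun u : ℝ => ((q1 - q2) * u + r * q2) / r) ((q1 - q2) / r) t := by
    have := (((hasDerivAt_id t).const_mul (q1 - q2)).add_const (r * q2)).div_const r
    simpa using this
  have hFtr : HasDerivAt (fun u : ℝ => F (u - r)) (|x (t - r)|) t := by
    have := (hFd (t - r)).comp t ((hasDerivAt_id t).sub_const r)
    simpa [Function.comp_def] using this
  have hGtr : HasDerivAt (fun u : ℝ => G (u - r)) ((t - r) * |x (t - r)|) t := by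
    have := (hGd (t - r)).comp t ((hasDerivAt_id t).sub_const r)
    simpa [Function.comp_def] using this
  have hD : HasDerivAt v2
      (((q1 - q2) / r) * (F t - F (t - r))
        + (((q1 - q2) * t + r * q2) / r) * (|x t| - |x (t - r)|)
        + c * (t * |x t| - (t - r) * |x (t - r)|)) t := by
    rw [hv2']
    exact (h1.mul ((hFd t).sub hFtr)).add (((hGd t).sub hGtr).const_mul c)
  have hderiv : deriv v2 t = ((q1 - q2) / r) * (F t - F (t - r))
      + q2 * |x t| - q1 * |x (t - r)| := by
    rw [hD.deriv, hcdef]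
    field_simp
    ring
  have hbound : v2 t ≤ q2 * (F t - F (t - r)) := by
    rw [hv2 t, hsub1 t, ← intervalIntegral.integral_const_mul]
    apply intervalIntegral.integral_mono_on (by linarith)
      ((hc1.mul (by continuity)).intervalIntegrable _ _)
      ((continuous_const.mul hc1).intervalIntegrable _ _)
    intro s hs
    have h1' : 0 ≤ (t - s) / r := div_nonneg (by linarith [hs.2]) hr.le
    have h2' : 0 ≤ (s - t + r) / r := div_nonneg (by linarith [hs.1]) hr.le
    have hsum : (t - s) / r + (s - t + r) / r = 1 := by
      field_simp
      ring
    have hw : ((t - s) / r) * q1 + ((s - t + r) / r) * q2 ≤ q2 := by nlinarith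
    calc |x s| * (((t - s) / r) * q1 + ((s - t + r) / r) * q2)
        ≤ |x s| * q2 := mul_le_mul_of_nonneg_left hw (abs_nonneg _)
      _ = q2 * |x s| := mul_comm _ _
  rw [hderiv]
  have hk : 0 < (q2 - q1) / (r * q2) := div_pos (by linarith) (by positivity)
  have hkey : ((q1 - q2) / r) * (F t - F (t - r)) ≤ -((q2 - q1) / (r * q2)) * v2 t := by
    have h2 : ((q2 - q1) / (r * q2)) * v2 t ≤ ((q2 - q1) / (r * q2)) * (q2 * (F t - F (t - r))) :=
      mul_le_mul_of_nonneg_left hbound hk.le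
    have h3 : ((q2 - q1) / (r * q2)) * (q2 * (F t - F (t - r)))
        = ((q2 - q1) / r) * (F t - F (t - r)) := by
      field_simp
    have h4 : (q1 - q2) / r * (F t - F (t - r))
        = -((q2 - q1) / r * (F t - F (t - r))) := by ring
    linarith
  linarith
end

section
/- Let n ∈ ℕ, d > 0, q > 0, and let x : ℝ → ℝⁿ be continuous. Define v2 : ℝ → ℝ by v2(t) = ∫_{t−d}^{t} ‖x(s)‖² · ( ((d+s−t)/d)·q + 1 ) ds. Then v2 is differentiable on ℝ and, for every t, v2'(t) = (q+1)·‖x(t)‖² − ‖x(t−d)‖² − (q/d) · ∫_{t−d}^{t} ‖x(s)‖² ds. -/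
theorem stmt_16 (n : ℕ) (d q : ℝ) (hd : 0 < d) (hq : 0 < q)
    (x : ℝ → EuclideanSpace ℝ (Fin n)) (hx_cont : Continuous x) :
    ∀ t : ℝ,
      HasDerivAt
        (fun t => ∫ s in (t - d)..t, ‖x s‖ ^ 2 * (((d + s - t) / d) * q + 1))
        ((q + 1) * ‖x t‖ ^ 2 - ‖x (t - d)‖ ^ 2 - (q / d) * ∫ s in (t - d)..t, ‖x s‖ ^ 2)
        t := by
  intro t
  set f : ℝ → ℝ := fun s => ‖x s‖ ^ 2 with hf_def
  have hf : Continuous f := (hx_cont.norm.pow 2)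
  have hg : Continuous (fun s => s * f s) := continuous_id.mul hf
  set H : ℝ → ℝ := fun u => ∫ s in (0:ℝ)..u, f s with hH_def
  set G : ℝ → ℝ := fun u => ∫ s in (0:ℝ)..u, s * f s with hG_def
  have hH : ∀ u : ℝ, HasDerivAt H (f u) u := fun u =>
    intervalIntegral.integral_hasDerivAt_right (hf.intervalIntegrable _ _)
      (hf.stronglyMeasurableAtFilter _ _) hf.continuousAt
  have hG : ∀ u : ℝ, HasDerivAt G (u * f u) u := fun u =>
    intervalIntegral.integral_hasDerivAt_right (hg.intervalIntegrable _ _)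
      (hg.stronglyMeasurableAtFilter _ _) hg.continuousAt
  have hsplit : ∀ (k : ℝ → ℝ), Continuous k → ∀ u : ℝ,
      (∫ s in (u - d)..u, k s) = (∫ s in (0:ℝ)..u, k s) - ∫ s in (0:ℝ)..(u-d), k s := by
    intro k hk u
    have := intervalIntegral.integral_add_adjacent_intervals (μ := MeasureTheory.volume)
      (hk.intervalIntegrable 0 (u-d)) (hk.intervalIntegrable (u-d) u)
    linarith
  have hd' : d ≠ 0 := ne_of_gt hd
  have key : ∀ u : ℝ,
      (∫ s in (u - d)..u, f s * (((d + s - u) / d) * q + 1))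
        = (((d - u)/d) * q + 1) * (H u - H (u - d)) + (q/d) * (G u - G (u - d)) := by
    intro u
    have h1 : ∀ s : ℝ, f s * (((d + s - u) / d) * q + 1)
        = (((d - u)/d) * q + 1) * f s + (q/d) * (s * f s) := by
      intro s; field_simp; ring
    calc (∫ s in (u - d)..u, f s * (((d + s - u) / d) * q + 1))
        = ∫ s in (u - d)..u, ((((d - u)/d) * q + 1) * f s + (q/d) * (s * f s)) := by
          simp_rw [h1]
      _ = (∫ s in (u - d)..u, (((d - u)/d) * q + 1) * f s)
          + ∫ s in (u - d)..u, (q/d) * (s * f s) :=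
          intervalIntegral.integral_add
            ((continuous_const.mul hf).intervalIntegrable _ _)
            ((continuous_const.mul hg).intervalIntegrable _ _)
      _ = (((d - u)/d) * q + 1) * (∫ s in (u - d)..u, f s)
          + (q/d) * (∫ s in (u - d)..u, s * f s) := by
          rw [intervalIntegral.integral_const_mul, intervalIntegral.integral_const_mul]
      _ = _ := by rw [hsplit f hf u, hsplit _ hg u]
  have heq : (fun t => ∫ s in (t - d)..t, f s * (((d + s - t) / d) * q + 1))
      = fun u => (((d - u)/d) * q + 1) * (H u - H (u - d)) + (q/d) * (G u - G (u - d)) :=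
    funext key
  rw [heq]
  have hc : HasDerivAt (fun u : ℝ => ((d - u)/d) * q + 1) (-1/d*q) t :=
    ((((hasDerivAt_id t).const_sub d).div_const d).mul_const q).add_const 1
  have hHd : HasDerivAt (fun u : ℝ => H (u - d)) (f (t - d) * 1) t :=
    by have := HasDerivAt.comp t (hH (t - d)) ((hasDerivAt_id t).sub_const d); exact this
  have hGd : HasDerivAt (fun u : ℝ => G (u - d)) (((t - d) * f (t - d)) * 1) t :=
    by have := HasDerivAt.comp t (hG (t - d)) ((hasDerivAt_id t).sub_const d); exact this
  have hA : HasDerivAt (fun u : ℝ => H u - H (u - d)) (f t - f (t - d) * 1) t :=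
    (hH t).sub hHd
  have hB : HasDerivAt (fun u : ℝ => G u - G (u - d))
      (t * f t - ((t - d) * f (t - d)) * 1) t := (hG t).sub hGd
  have hTotal := (hc.mul hA).add (hB.const_mul (q/d))
  convert hTotal using 1
  · rfl
  · rfl
  · rfl
  rw [hsplit f hf t]
  simp only [hf_def]
  field_simp
  ring
end
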